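/- There exist two structures of the same cardinality, each consisting of hereditarily finite sets over a continuum-sized set of atoms equipped with a linear order on the atoms, that satisfy the same hereditarily-finite-set axioms with atoms densely ordered without endpoints, but are not isomorphic: take the atom order of type ℝ ⊕ ℚ in one and its reverse in the other. -/

import Mathlib

/-- A model of the hereditarily finite sets over a type `A` of atoms: atoms are
memberless and injectively embedded, extensionality holds for non-atoms (sets), every
element has finitely many members, every finite collection of elements is the extension
of some set, and the whole universe satisfies ∈-induction (minimality). -/
structure HFModel (A : Type) where
  H : Type
  mem : H → H → Prop
  atom : A → H
  atom_inj : Function.Injective atom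
  mem_atom : ∀ (a : A) (x : H), ¬ mem x (atom a)
  ext : ∀ x y : H, (∀ a, x ≠ atom a) → (∀ a, y ≠ atom a) →
    (∀ z, mem z x ↔ mem z y) → x = y
  finite_mem : ∀ x : H, {z | mem z x}.Finite
  exists_set : ∀ s : Set H, s.Finite →
    ∃ x : H, (∀ a, x ≠ atom a) ∧ ∀ z, mem z x ↔ z ∈ s
  minimal : ∀ P : Set H, (∀ a, atom a ∈ P) →
    (∀ x, (∀ a, x ≠ atom a) → (∀ z, mem z x → z ∈ P) → x ∈ P) → ∀ x, x ∈ P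

section AuxModel

namespace HFBuild

local infixl:50 " ~ " => Lists.Equiv

variable {α : Type}

theorem mem_respects {a a' l l' : Lists α} (ha : a ~ a') (hl : l ~ l') :
    a ∈ l ↔ a' ∈ l' := by
  cases hl with
  | refl l =>
    obtain ⟨b, l⟩ := l
    cases b
    · exact Iff.of_eq rfl
    · exact Lists'.mem_equiv_left ha
  | antisymm h₁ h₂ =>
    constructor
    · intro h
      exact Lists'.mem_of_subset h₁ ((Lists'.mem_equiv_left ha).1 h)
    · intro h
      exact Lists'.mem_of_subset h₂ ((Lists'.mem_equiv_left ha.symm).1 h)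

/-- Membership on the quotient. -/
def fmem (x y : Finsets α) : Prop :=
  Quotient.lift₂ (fun a l : Lists α => a ∈ l)
    (fun _ _ _ _ ha hl => propext (mem_respects ha hl)) x y

theorem fmem_mk {a l : Lists α} : fmem (⟦a⟧ : Finsets α) ⟦l⟧ ↔ a ∈ l := Iff.rfl

/-- The atom embedding. -/
def fatom (a : α) : Finsets α := ⟦Lists.atom a⟧

theorem fatom_inj : Function.Injective (fatom (α := α)) := by
  intro a b h
  have h3 : Lists.atom a = Lists.atom b := Lists.equiv_atom.1 (Quotient.exact h)
  injection h3 with h4 h5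
  injection h5

theorem not_fmem_fatom (a : α) (x : Finsets α) : ¬ fmem x (fatom a) := by
  induction x using Quotient.ind with
  | _ w => exact fun h => h

theorem mk_of'_ne_fatom (l : Lists' α true) (a : α) :
    (⟦Lists.of' l⟧ : Finsets α) ≠ fatom a := by
  intro h
  have h3 : Lists.atom a = Lists.of' l := Lists.equiv_atom.1 (Quotient.exact h).symm
  exact Bool.noConfusion (congrArg Sigma.fst h3)

theorem fext (x y : Finsets α) (hx : ∀ a, x ≠ fatom a) (hy : ∀ a, y ≠ fatom a)
    (h : ∀ z, fmem z x ↔ fmem z y) : x = y := by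
  induction x using Quotient.ind with | _ u =>
  induction y using Quotient.ind with | _ v =>
  obtain ⟨bu, u⟩ := u
  cases bu
  · cases u with | atom a => exact absurd rfl (hx a)
  · obtain ⟨bv, v⟩ := v
    cases bv
    · cases v with | atom a => exact absurd rfl (hy a)
    · refine Quotient.sound (Lists.Equiv.antisymm ?_ ?_)
      · refine Lists'.subset_def.2 fun z hz => ?_
        exact (h ⟦z⟧).1 ⟨z, hz, Lists.Equiv.refl z⟩
      · refine Lists'.subset_def.2 fun z hz => ?_
        exact (h ⟦z⟧).2 ⟨z, hz, Lists.Equiv.refl z⟩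

theorem ffinite_mem (x : Finsets α) : {z | fmem z x}.Finite := by
  induction x using Quotient.ind with | _ u =>
  obtain ⟨bu, u⟩ := u
  cases bu
  · convert Set.finite_empty
    ext z
    induction z using Quotient.ind with | _ w =>
    exact ⟨fun h => h, fun h => h.elim⟩
  · apply Set.Finite.subset ((u.toList.finite_toSet).image (fun w : Lists α => (⟦w⟧ : Finsets α)))
    rintro z hz
    induction z using Quotient.ind with | _ w =>
    obtain ⟨w', hw', he⟩ := (hz : w ∈ u)
    exact ⟨w', hw', (Quotient.sound he.symm : (⟦w'⟧ : Finsets α) = ⟦w⟧)⟩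

theorem fexists_set (s : Set (Finsets α)) (hs : s.Finite) :
    ∃ x : Finsets α, (∀ a, x ≠ fatom a) ∧ ∀ z, fmem z x ↔ z ∈ s := by
  classical
  set L : List (Finsets α) := hs.toFinset.toList with hL
  have hmemL : ∀ z, z ∈ L ↔ z ∈ s := by
    intro z; rw [hL, Finset.mem_toList, Set.Finite.mem_toFinset]
  refine ⟨⟦Lists.of' (Lists'.ofList (L.map Quotient.out))⟧, fun a => mk_of'_ne_fatom _ a, ?_⟩
  intro z
  induction z using Quotient.ind with | _ w =>
  constructor
  · rintro ⟨w', hw', he⟩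
    rw [Lists'.to_ofList] at hw'
    obtain ⟨y, hy, rfl⟩ := List.mem_map.1 hw'
    have : (⟦w⟧ : Finsets α) = y := by
      rw [show y = ⟦y.out⟧ from (Quotient.out_eq y).symm]
      exact Quotient.sound he
    rw [this]
    exact (hmemL y).1 hy
  · intro hz
    refine ⟨Quotient.out ⟦w⟧, ?_, Lists.Equiv.symm (Quotient.exact (Quotient.out_eq (⟦w⟧ : Finsets α)))⟩
    rw [Lists'.to_ofList]
    exact List.mem_map.2 ⟨⟦w⟧, (hmemL _).2 hz, rfl⟩

theorem fminimal (P : Set (Finsets α)) (hatom : ∀ a, fatom a ∈ P)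
    (hset : ∀ x, (∀ a, x ≠ fatom a) → (∀ z, fmem z x → z ∈ P) → x ∈ P) :
    ∀ x, x ∈ P := by
  have main : PProd (∀ l : Lists α, (⟦l⟧ : Finsets α) ∈ P)
      (∀ l : Lists' α true, ∀ w ∈ l.toList, (⟦w⟧ : Finsets α) ∈ P) := by
    apply Lists.inductionMut
    · exact fun a => hatom a
    · intro l D
      refine hset _ (fun a => mk_of'_ne_fatom _ a) ?_
      intro z hz
      induction z using Quotient.ind with | _ w =>
      obtain ⟨w', hw', he⟩ := (hz : w ∈ l)
      rw [show (⟦w⟧ : Finsets α) = ⟦w'⟧ from Quotient.sound he]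
      exact D w' hw'
    · intro w hw
      exact absurd hw (List.not_mem_nil (a := w))
    · intro a l ha hl w hw
      rcases List.mem_cons.1 hw with h | h
      · obtain ⟨b, a⟩ := a
        exact h ▸ ha
      · exact hl w h
  intro x
  induction x using Quotient.ind with | _ u =>
  exact main.1 u

/-- The hereditarily finite sets over `α` as an `HFModel`. -/
def model (α : Type) : HFModel α where
  H := Finsets α
  mem := fmem
  atom := fatom
  atom_inj := fatom_inj
  mem_atom := not_fmem_fatom
  ext := fext
  finite_mem := ffinite_mem
  exists_set := fexists_set
  minimal := fminimal

end HFBuild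


section AuxOrder

open Cardinal Sum

abbrev RQL := ℝ ⊕ₗ ℚ

theorem exists_equiv : Nonempty (ℝ ≃ RQL) := by
  rw [← Cardinal.eq]
  have : #RQL = #(ℝ ⊕ ℚ) := Cardinal.mk_congr (ofLex)
  rw [this, Cardinal.mk_sum, Cardinal.mk_real, Cardinal.mk_denumerable ℚ,
    Cardinal.lift_id, Cardinal.lift_id, Cardinal.continuum_add_aleph0]

/-- Every finite-position element of `L` is `inl` or `inr`. -/
theorem RQL_cases (x : RQL) : (∃ r : ℝ, x = toLex (inl r)) ∨ (∃ q : ℚ, x = toLex (inr q)) := by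
  rcases h : ofLex x with r | q
  · exact Or.inl ⟨r, congrArg toLex h⟩
  · exact Or.inr ⟨q, congrArg toLex h⟩

theorem glb_below_inl (S : Set RQL) (hne : S.Nonempty)
    (hub : ∀ s ∈ S, s ≤ toLex (inl (0 : ℝ))) (hbdd : BddBelow S) :
    ∃ m, IsGLB S m := by
  have hS : ∀ s ∈ S, ∃ r : ℝ, s = toLex (inl r) := by
    intro s hs
    rcases RQL_cases s with ⟨r, rfl⟩ | ⟨q, rfl⟩
    · exact ⟨r, rfl⟩
    · exact absurd (hub _ hs) Sum.Lex.not_inr_le_inl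
  set T : Set ℝ := {r | toLex (inl r) ∈ S} with hT
  have hTne : T.Nonempty := by
    obtain ⟨s, hs⟩ := hne
    obtain ⟨r, rfl⟩ := hS s hs
    exact ⟨r, hs⟩
  have hTbdd : BddBelow T := by
    obtain ⟨b, hb⟩ := hbdd
    rcases RQL_cases b with ⟨r₀, rfl⟩ | ⟨q₀, rfl⟩
    · exact ⟨r₀, fun r hr => Sum.Lex.inl_le_inl_iff.1 (hb hr)⟩
    · obtain ⟨r, hr⟩ := hTne
      exact absurd (hb hr) Sum.Lex.not_inr_le_inl
  refine ⟨toLex (inl (sInf T)), ?_, ?_⟩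
  · intro s hs
    obtain ⟨r, rfl⟩ := hS s hs
    exact Sum.Lex.inl_le_inl_iff.2 (csInf_le hTbdd hs)
  · intro b hb
    rcases RQL_cases b with ⟨r₀, rfl⟩ | ⟨q₀, rfl⟩
    · refine Sum.Lex.inl_le_inl_iff.2 (le_csInf hTne fun r hr => ?_)
      exact Sum.Lex.inl_le_inl_iff.1 (hb hr)
    · obtain ⟨r, hr⟩ := hTne
      exact absurd (hb hr) Sum.Lex.not_inr_le_inl

theorem no_lub_above (x : RQL) :
    ∃ S : Set RQL, S.Nonempty ∧ (∀ s ∈ S, x ≤ s) ∧ BddAbove S ∧ ∀ m, ¬ IsLUB S m := by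
  obtain ⟨q₀, hq₀⟩ : ∃ q₀ : ℚ, x ≤ toLex (inr q₀) := by
    rcases RQL_cases x with ⟨r, rfl⟩ | ⟨q, rfl⟩
    · exact ⟨0, Sum.Lex.inl_le_inr r 0⟩
    · exact ⟨q, le_refl _⟩
  set ξ : ℝ := (q₀ : ℝ) + Real.sqrt 2 with hξ
  have hξirr : Irrational ξ := by
    rw [hξ, add_comm]
    exact Irrational.add_ratCast (q := q₀) irrational_sqrt_two
  have hq₀ξ : (q₀ : ℝ) < ξ := by
    rw [hξ]
    nlinarith [Real.sqrt_pos.2 (by norm_num : (0:ℝ) < 2)]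
  set Qs : Set ℚ := {q | q₀ ≤ q ∧ (q : ℝ) < ξ} with hQs
  refine ⟨(fun q : ℚ => toLex (inr q)) '' Qs, ⟨toLex (inr q₀), ⟨q₀, ⟨le_refl _, hq₀ξ⟩, rfl⟩⟩,
    ?_, ⟨toLex (inr (q₀ + 2)), ?_⟩, ?_⟩
  · rintro s ⟨q, ⟨h1, _⟩, rfl⟩
    exact le_trans hq₀ (Sum.Lex.inr_le_inr_iff.2 h1)
  · rintro s ⟨q, ⟨_, h2⟩, rfl⟩
    refine Sum.Lex.inr_le_inr_iff.2 ?_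
    have : (q : ℝ) < (q₀ : ℝ) + 2 := by
      refine lt_of_lt_of_le h2 ?_
      rw [hξ]
      have := Real.sq_sqrt (by norm_num : (2:ℝ) ≥ 0)
      nlinarith [Real.sqrt_nonneg 2, Real.sq_sqrt (by norm_num : (0:ℝ) ≤ 2),
        Real.sqrt_lt_sqrt (by norm_num : (0:ℝ) ≤ 2) (by norm_num : (2:ℝ) < 4)]
    exact_mod_cast le_of_lt (by exact_mod_cast this : q < q₀ + 2)
  · rintro m ⟨hub, hlst⟩
    have hq₀m : toLex (inr q₀) ≤ m := hub ⟨q₀, ⟨le_refl _, hq₀ξ⟩, rfl⟩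
    rcases RQL_cases m with ⟨r, rfl⟩ | ⟨p, rfl⟩
    · exact Sum.Lex.not_inr_le_inl hq₀m
    have hq₀p : q₀ ≤ p := Sum.Lex.inr_le_inr_iff.1 hq₀m
    have hpξ : ξ ≤ (p : ℝ) := by
      by_contra hlt
      push_neg at hlt
      obtain ⟨q, hq1, hq2⟩ := exists_rat_btwn hlt
      have : toLex (inr q) ≤ toLex (inr p) :=
        hub ⟨q, ⟨le_of_lt (lt_of_le_of_lt hq₀p (by exact_mod_cast hq1)), hq2⟩, rfl⟩
      exact absurd (Sum.Lex.inr_le_inr_iff.1 this) (not_le.2 (by exact_mod_cast hq1))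
    have hplt : ξ < (p : ℝ) := lt_of_le_of_ne hpξ (fun h => hξirr ⟨p, h.symm⟩)
    obtain ⟨q', hq'1, hq'2⟩ := exists_rat_btwn hplt
    have : (toLex (inr p) : RQL) ≤ toLex (inr q') := by
      refine hlst ?_
      rintro s ⟨q, ⟨_, h2⟩, rfl⟩
      refine Sum.Lex.inr_le_inr_iff.2 ?_
      exact_mod_cast le_of_lt (lt_trans h2 hq'1)
    exact absurd (Sum.Lex.inr_le_inr_iff.1 this) (not_le.2 (by exact_mod_cast hq'2))

theorem no_anti (h : RQL ≃ RQL) (hanti : ∀ x y : RQL, x < y ↔ h y < h x) : False := by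
  have hle : ∀ x y : RQL, x ≤ y ↔ h y ≤ h x := by
    intro x y
    rw [← not_lt, ← not_lt, hanti]
  have hle' : ∀ x y : RQL, x ≤ y ↔ h.symm y ≤ h.symm x := by
    intro x y
    conv_lhs => rw [← h.apply_symm_apply x, ← h.apply_symm_apply y, ← hle]
  obtain ⟨S, hne, hlb, hbdd, hno⟩ := no_lub_above (h (toLex (inl (0:ℝ))))
  set T : Set RQL := h.symm '' S with hTdef
  have hTne : T.Nonempty := hne.image _
  have hub : ∀ t ∈ T, t ≤ toLex (inl (0:ℝ)) := by
    rintro t ⟨s, hs, rfl⟩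
    have := hlb s hs
    rw [hle'] at this
    simpa using this
  have hTbdd : BddBelow T := by
    obtain ⟨u, hu⟩ := hbdd
    refine ⟨h.symm u, ?_⟩
    rintro t ⟨s, hs, rfl⟩
    rw [← hle']
    exact hu hs
  obtain ⟨m, hmlb, hmgr⟩ := glb_below_inl T hTne hub hTbdd
  refine hno (h m) ⟨?_, ?_⟩
  · intro s hs
    have : m ≤ h.symm s := hmlb ⟨s, hs, rfl⟩
    rw [hle] at this
    simpa using this
  · intro u hu
    have : h.symm u ∈ lowerBounds T := by
      rintro t ⟨s, hs, rfl⟩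
      rw [← hle']
      exact hu hs
    have h2 := hmgr this
    rw [hle] at h2
    simpa using h2


end AuxOrder
end AuxModel

/-- There are two structures with the same underlying set (hence the same cardinality),
both consisting of the hereditarily finite sets over a continuum of atoms with the atoms
densely linearly ordered without endpoints, which are not isomorphic: order the atoms in
type `ℝ ⊕ ℚ` in one structure and reversely in the other. -/
theorem hf_dense_atom_orders_not_isomorphic :
    ∃ (M : HFModel ℝ) (lt₁ : ℝ → ℝ → Prop),
      -- `lt₁` has order type `ℝ ⊕ ℚ`
      (∃ e : ℝ ≃ (ℝ ⊕ₗ ℚ), ∀ a b : ℝ, lt₁ a b ↔ e a < e b) ∧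
      -- `lt₁` is a dense order without endpoints on the atoms
      (∀ a b : ℝ, lt₁ a b → ∃ c, lt₁ a c ∧ lt₁ c b) ∧
      (∀ a : ℝ, ∃ b, lt₁ a b) ∧ (∀ a : ℝ, ∃ b, lt₁ b a) ∧
      -- the structures `(HF(ℝ), ∈, lt₁, ℝ)` and `(HF(ℝ), ∈, lt₁⁻¹, ℝ)` are not isomorphic
      ¬ ∃ (F : M.H ≃ M.H) (g : ℝ ≃ ℝ),
          (∀ x y : M.H, M.mem x y ↔ M.mem (F x) (F y)) ∧
          (∀ a : ℝ, F (M.atom a) = M.atom (g a)) ∧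
          (∀ a b : ℝ, lt₁ a b ↔ lt₁ (g b) (g a)) := by
  obtain ⟨e⟩ := exists_equiv
  refine ⟨HFBuild.model ℝ, fun a b => e a < e b, ⟨e, fun a b => Iff.rfl⟩, ?_, ?_, ?_, ?_⟩
  · intro a b hab
    obtain ⟨c', h1, h2⟩ := exists_between hab
    exact ⟨e.symm c', by simpa using h1, by simpa using h2⟩
  · intro a
    obtain ⟨y, hy⟩ := exists_gt (e a)
    exact ⟨e.symm y, by simpa using hy⟩
  · intro a
    obtain ⟨y, hy⟩ := exists_lt (e a)
    exact ⟨e.symm y, by simpa using hy⟩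
  · rintro ⟨F, g, _, _, hg⟩
    refine no_anti ((e.symm.trans g).trans e) ?_
    intro x y
    have h1 : x < y ↔ e (e.symm x) < e (e.symm y) := by simp
    rw [h1]
    exact (hg (e.symm x) (e.symm y)).trans Iff.rfl
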